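/- arXiv:1003.4092 — 5 statements merged into one kernel-verified Lean document; each statement's English description precedes it below -/
import Mathlib

section
/- (Doubling property on admissible balls.) Let a, τ > 0. There exists a constant d = d_{a,τ,n}, depending only on a, τ, and the dimension n, such that whenever B₁ = B(c₁,r₁) ∈ 𝓑_a and B₂ = B(c₂,r₂) is any ball with B₁ ∩ B₂ ≠ ∅ and r₂ ≤ τ r₁, one has γ(B₂) ≤ d γ(B₁). -/
open MeasureTheory Metric Set
open scoped ENNReal NNReal BigOperators

noncomputable section

/-- The gaussian measure `dγ(x) = (2π)^{-n/2} exp(-|x|²/2) dx` on `ℝⁿ`. -/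
def gaussMeasure (n : ℕ) : Measure (EuclideanSpace ℝ (Fin n)) :=
  volume.withDensity fun x =>
    ENNReal.ofReal ((2 * Real.pi) ^ (-(n : ℝ) / 2) * Real.exp (-‖x‖ ^ 2 / 2))

/-- `m(x) = min {1, 1/‖x‖}`. -/
def mfun {n : ℕ} (x : EuclideanSpace ℝ (Fin n)) : ℝ :=
  if ‖x‖ ≤ 1 then 1 else ‖x‖⁻¹

/-- Ornstein–Uhlenbeck (Mehler) semigroup `e^{-tL} u (x)`. -/
def mehler (n : ℕ) (u : EuclideanSpace ℝ (Fin n) → ℝ) (t : ℝ)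
    (x : EuclideanSpace ℝ (Fin n)) : ℝ :=
  ∫ y, u (Real.exp (-t) • x + Real.sqrt (1 - Real.exp (-2 * t)) • y) ∂gaussMeasure n

/-- The gaussian conical square function `S_a u (x)`. -/
def Sfun (n : ℕ) (a : ℝ) (u : EuclideanSpace ℝ (Fin n) → ℝ)
    (x : EuclideanSpace ℝ (Fin n)) : ℝ≥0∞ :=
  (∫⁻ t in Set.Ioo (0 : ℝ) (a * mfun x),
      (∫⁻ y in ball x t,
        (gaussMeasure n (ball y t))⁻¹ *
          ENNReal.ofReal ((t * ‖fderiv ℝ (mehler n u (t ^ 2)) y‖) ^ 2) ∂gaussMeasure n) /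
        ENNReal.ofReal t) ^ (1 / 2 : ℝ)

/-- The gaussian non-tangential maximal function `T*_{(A,a)} u (x)`. -/
def Tstar (n : ℕ) (A a : ℝ) (u : EuclideanSpace ℝ (Fin n) → ℝ)
    (x : EuclideanSpace ℝ (Fin n)) : ℝ≥0∞ :=
  ⨆ (y : EuclideanSpace ℝ (Fin n)) (t : ℝ) (_ : dist y x < A * t) (_ : 0 < t)
      (_ : t < a * mfun x),
    ((gaussMeasure n (ball y (A * t)))⁻¹ *
        ∫⁻ z in ball y (A * t), ENNReal.ofReal ((mehler n u (t ^ 2) z) ^ 2) ∂gaussMeasure n) ^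
      (1 / 2 : ℝ)

/-- The admissible (gaussian) Hardy–Littlewood maximal function `M*_a f (x)`. -/
def Mstar (n : ℕ) (a : ℝ) (f : EuclideanSpace ℝ (Fin n) → ℝ)
    (x : EuclideanSpace ℝ (Fin n)) : ℝ≥0∞ :=
  ⨆ (r : ℝ) (_ : 0 < r) (_ : r ≤ a * mfun x),
    (gaussMeasure n (ball x r))⁻¹ *
      ∫⁻ y in ball x r, ENNReal.ofReal |f y| ∂gaussMeasure n

/-- The admissible cone `Γ^{(A,a)}_x(γ)`. -/
def cone (n : ℕ) (A a : ℝ) (x : EuclideanSpace ℝ (Fin n)) :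
    Set (EuclideanSpace ℝ (Fin n) × ℝ) :=
  {p | dist p.1 x < A * p.2 ∧ 0 < p.2 ∧ p.2 < a * mfun x}

/-- The modified admissible cone `Γ̃^{(A,a)}_x(γ)`. -/
def coneT (n : ℕ) (A a : ℝ) (x : EuclideanSpace ℝ (Fin n)) :
    Set (EuclideanSpace ℝ (Fin n) × ℝ) :=
  {p | dist p.1 x < A * p.2 ∧ 0 < p.2 ∧ p.2 < a * mfun p.1}

/-- The dyadic cube `2^{-k}(v + [0,1)ⁿ)` of scale `k`. -/
def dyadicCube (n k : ℕ) (v : Fin n → ℤ) : Set (EuclideanSpace ℝ (Fin n)) :=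
  {x | ∀ i, x i ∈ Set.Ico ((2 : ℝ) ^ (-(k : ℤ)) * v i) ((2 : ℝ) ^ (-(k : ℤ)) * (v i + 1))}

/-- The centre of the dyadic cube `2^{-k}(v + [0,1)ⁿ)`. -/
def cubeCenter (n k : ℕ) (v : Fin n → ℤ) : EuclideanSpace ℝ (Fin n) :=
  WithLp.toLp 2 (fun i => (2 : ℝ) ^ (-(k : ℤ)) * (v i + 1 / 2))

/-- The layers `L_0 = [-1,1)ⁿ`, `L_l = [-2^l,2^l)ⁿ \ [-2^{l-1},2^{l-1})ⁿ`. -/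
def layer (n : ℕ) : ℕ → Set (EuclideanSpace ℝ (Fin n))
  | 0 => {x | ∀ i, x i ∈ Set.Ico (-1 : ℝ) 1}
  | (l + 1) =>
      {x | ∀ i, x i ∈ Set.Ico (-(2 : ℝ) ^ (l + 1)) ((2 : ℝ) ^ (l + 1))} \
        {x | ∀ i, x i ∈ Set.Ico (-(2 : ℝ) ^ l) ((2 : ℝ) ^ l)}

/-- The cube `α ∘ Q` with the same centre as `Q = 2^{-k}(v + [0,1)ⁿ)` and `α` times
its side-length. -/
def scaledCube (n k : ℕ) (v : Fin n → ℤ) (α : ℝ) : Set (EuclideanSpace ℝ (Fin n)) :=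
  {x | ∀ i, x i ∈ Set.Ico (cubeCenter n k v i - α * (2 : ℝ) ^ (-(k : ℤ)) / 2)
      (cubeCenter n k v i + α * (2 : ℝ) ^ (-(k : ℤ)) / 2)}

/-- The Ornstein–Uhlenbeck operator `Lf(x) = -Δf(x) + x·∇f(x)`. -/
def OU (n : ℕ) (f : EuclideanSpace ℝ (Fin n) → ℂ) (x : EuclideanSpace ℝ (Fin n)) : ℂ :=
  -(∑ i : Fin n, iteratedFDeriv ℝ 2 f x ![EuclideanSpace.single i 1, EuclideanSpace.single i 1]) +
    fderiv ℝ f x x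


set_option maxHeartbeats 2000000 in
/-- doubling property of the gaussian measure on admissible balls. -/
theorem gaussian_doubling_admissible (n : ℕ) (a τ : ℝ) (ha : 0 < a) (hτ : 0 < τ) :
    ∃ d > (0 : ℝ), ∀ (c₁ c₂ : EuclideanSpace ℝ (Fin n)) (r₁ r₂ : ℝ),
      0 ≤ r₁ → r₁ ≤ a * mfun c₁ →
      (ball c₁ r₁ ∩ ball c₂ r₂).Nonempty → r₂ ≤ τ * r₁ →
      gaussMeasure n (ball c₂ r₂) ≤ ENNReal.ofReal d * gaussMeasure n (ball c₁ r₁) := by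
  have h2τ : (0:ℝ) < 1 + 2*τ := by linarith
  obtain ⟨K₂, hK₂def⟩ : ∃ K₂ : ℝ, K₂ = (1+2*τ)*a + 3*((1+2*τ)*a)^2/2 := ⟨_, rfl⟩
  obtain ⟨K₁, hK₁def⟩ : ∃ K₁ : ℝ, K₁ = a + a^2/2 := ⟨_, rfl⟩
  refine ⟨τ^n * Real.exp (K₂ + K₁), by positivity, ?_⟩
  intro c₁ c₂ r₁ r₂ _hr₁0 hadm hne hr₂τ
  obtain ⟨z, hz₁, hz₂⟩ := hne
  have hr₁ : 0 < r₁ := pos_of_mem_ball hz₁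
  have hr₂ : 0 < r₂ := pos_of_mem_ball hz₂
  set s : ℝ := ‖c₁‖ with hsdef
  have hs0 : 0 ≤ s := norm_nonneg _
  -- basic bounds from admissibility
  have hra : r₁ ≤ a := by
    unfold mfun at hadm
    split_ifs at hadm with h
    · linarith
    · push_neg at h
      have hs1 : (0:ℝ) < s := lt_trans one_pos h
      have : s⁻¹ ≤ 1 := by rw [inv_le_one_iff₀]; right; exact h.le
      nlinarith
  have hsr : s * r₁ ≤ a := by
    unfold mfun at hadm
    split_ifs at hadm with h
    · nlinarith
    · push_neg at h
      have hs1 : (0:ℝ) < s := lt_trans one_pos h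
      have := mul_le_mul_of_nonneg_left hadm hs0
      rw [show s * (a * s⁻¹) = a * (s * s⁻¹) by ring, mul_inv_cancel₀ (ne_of_gt hs1)] at this
      linarith
  set R : ℝ := (1+2*τ)*r₁ with hRdef
  have hR0 : 0 ≤ R := by positivity
  have hsub : ball c₂ r₂ ⊆ ball c₁ R := by
    intro x hx
    rw [mem_ball] at hx hz₁ hz₂ ⊢
    have h4 := dist_triangle4 x c₂ z c₁
    rw [dist_comm c₂ z] at h4
    have hr : r₂ + r₂ + r₁ ≤ R := by rw [hRdef]; linarith
    linarith
  obtain ⟨Cn, hCndef⟩ : ∃ Cn : ℝ, Cn = (2 * Real.pi) ^ (-(n : ℝ) / 2) := ⟨_, rfl⟩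
  have hCn : 0 < Cn := hCndef ▸ Real.rpow_pos_of_pos (by positivity) _
  obtain ⟨D₂, hD₂def⟩ : ∃ D₂ : ℝ, D₂ = Cn * Real.exp (K₂ - s^2/2) := ⟨_, rfl⟩
  obtain ⟨D₁, hD₁def⟩ : ∃ D₁ : ℝ, D₁ = Cn * Real.exp (-K₁ - s^2/2) := ⟨_, rfl⟩
  have hD₂0 : 0 ≤ D₂ := hD₂def ▸ mul_nonneg hCn.le (Real.exp_nonneg _)
  have hD₁0 : 0 ≤ D₁ := hD₁def ▸ mul_nonneg hCn.le (Real.exp_nonneg _)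
  have hmeas : Measurable fun x : EuclideanSpace ℝ (Fin n) =>
      ENNReal.ofReal (Cn * Real.exp (-‖x‖ ^ 2 / 2)) := by
    apply Measurable.ennreal_ofReal
    fun_prop
  -- upper bound for γ(B₂)
  have h2 : gaussMeasure n (ball c₂ r₂) ≤ ENNReal.ofReal D₂ * volume (ball c₂ r₂) := by
    rw [gaussMeasure, withDensity_apply _ measurableSet_ball, ← hCndef]
    calc (∫⁻ x in ball c₂ r₂, ENNReal.ofReal (Cn * Real.exp (-‖x‖ ^ 2 / 2)))
        ≤ ∫⁻ _x in ball c₂ r₂, ENNReal.ofReal D₂ := by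
          refine setLIntegral_mono measurable_const fun x hx => ?_
          refine ENNReal.ofReal_le_ofReal ?_
          have hx' := hsub hx
          rw [mem_ball, dist_eq_norm] at hx'
          have habs : |‖x‖ - s| ≤ R := le_trans (abs_norm_sub_norm_le x c₁) hx'.le
          rw [abs_le] at habs
          have hxn : (0:ℝ) ≤ ‖x‖ := norm_nonneg _
          have hsR : s * R ≤ (1+2*τ)*a := by rw [hRdef]; nlinarith
          have hRa : R ≤ (1+2*τ)*a := by rw [hRdef]; nlinarith
          have hexp : -‖x‖^2/2 ≤ K₂ - s^2/2 := by
            rw [hK₂def]; nlinarith [sq_nonneg (‖x‖ - s), sq_nonneg R, mul_nonneg hR0 hxn]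
          rw [hD₂def]
          exact mul_le_mul_of_nonneg_left (Real.exp_le_exp.mpr hexp) hCn.le
      _ = ENNReal.ofReal D₂ * volume (ball c₂ r₂) := setLIntegral_const _ _
  -- lower bound for γ(B₁)
  have h1 : ENNReal.ofReal D₁ * volume (ball c₁ r₁) ≤ gaussMeasure n (ball c₁ r₁) := by
    rw [gaussMeasure, withDensity_apply _ measurableSet_ball, ← hCndef]
    calc ENNReal.ofReal D₁ * volume (ball c₁ r₁)
        = ∫⁻ _x in ball c₁ r₁, ENNReal.ofReal D₁ := (setLIntegral_const _ _).symm
      _ ≤ ∫⁻ x in ball c₁ r₁, ENNReal.ofReal (Cn * Real.exp (-‖x‖ ^ 2 / 2)) := by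
          refine setLIntegral_mono hmeas fun x hx => ?_
          refine ENNReal.ofReal_le_ofReal ?_
          rw [mem_ball, dist_eq_norm] at hx
          have hxs : ‖x‖ ≤ s + r₁ := by
            have := norm_sub_norm_le x c₁
            linarith [this, hx.le]
          have hxn : (0:ℝ) ≤ ‖x‖ := norm_nonneg _
          have hexp : -K₁ - s^2/2 ≤ -‖x‖^2/2 := by rw [hK₁def]; nlinarith
          rw [hD₁def]
          exact mul_le_mul_of_nonneg_left (Real.exp_le_exp.mpr hexp) hCn.le
  -- volumes
  have hvol : ∀ (c : EuclideanSpace ℝ (Fin n)) (r : ℝ), 0 < r →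
      volume (ball c r)
        = ENNReal.ofReal (r ^ n) * volume (ball (0 : EuclideanSpace ℝ (Fin n)) 1) := by
    rcases Nat.eq_zero_or_pos n with hn | hn
    · subst hn
      have hb : ∀ (c' : EuclideanSpace ℝ (Fin 0)) (r' : ℝ), 0 < r' → ball c' r' = univ := by
        intro c' r' hr'
        ext x
        simp only [mem_ball, mem_univ, iff_true]
        have hx : dist x c' = 0 := by
          rw [EuclideanSpace.dist_eq]
          simp
        linarith
      intro c r hr
      rw [hb c r hr, hb 0 1 one_pos, pow_zero, ENNReal.ofReal_one, one_mul]
    · intro c r hr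
      haveI : Nontrivial (EuclideanSpace ℝ (Fin n)) :=
        Module.nontrivial_of_finrank_pos (R := ℝ)
          (by rw [finrank_euclideanSpace_fin]; exact hn)
      rw [Measure.addHaar_ball volume c hr.le, finrank_euclideanSpace_fin]
  have hv2 := hvol c₂ r₂ hr₂
  have hv1 := hvol c₁ r₁ hr₁
  set V : ℝ≥0∞ := volume (ball (0 : EuclideanSpace ℝ (Fin n)) 1) with hVdef
  -- the real-number comparison
  have hreal : D₂ * r₂ ^ n ≤ (τ^n * Real.exp (K₂ + K₁)) * (D₁ * r₁ ^ n) := by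
    have hpow : r₂ ^ n ≤ τ^n * r₁ ^ n := by
      rw [← mul_pow]; exact pow_le_pow_left₀ hr₂.le hr₂τ n
    have hexp : Real.exp (K₂ + K₁) * Real.exp (-K₁ - s ^ 2 / 2) = Real.exp (K₂ - s ^ 2 / 2) := by
      rw [← Real.exp_add]; congr 1; ring
    calc D₂ * r₂ ^ n ≤ D₂ * (τ^n * r₁ ^ n) := mul_le_mul_of_nonneg_left hpow hD₂0
      _ = (τ^n * Real.exp (K₂ + K₁)) * (D₁ * r₁ ^ n) := by
          rw [hD₂def, hD₁def]
          linear_combination (-(τ^n * Cn * r₁ ^ n)) * hexp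
  -- assemble
  calc gaussMeasure n (ball c₂ r₂)
      ≤ ENNReal.ofReal D₂ * (ENNReal.ofReal (r₂ ^ n) * V) := by rw [← hv2]; exact h2
    _ = ENNReal.ofReal (D₂ * r₂ ^ n) * V := by
        rw [ENNReal.ofReal_mul hD₂0, mul_assoc]
    _ ≤ ENNReal.ofReal ((τ^n * Real.exp (K₂ + K₁)) * (D₁ * r₁ ^ n)) * V :=
        mul_le_mul_left (ENNReal.ofReal_le_ofReal hreal) V
    _ = ENNReal.ofReal (τ^n * Real.exp (K₂ + K₁)) *
          (ENNReal.ofReal D₁ * (ENNReal.ofReal (r₁ ^ n) * V)) := by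
        rw [ENNReal.ofReal_mul (by positivity : (0:ℝ) ≤ τ^n * Real.exp (K₂ + K₁)),
          ENNReal.ofReal_mul hD₁0]
        ring
    _ ≤ ENNReal.ofReal (τ^n * Real.exp (K₂ + K₁)) * gaussMeasure n (ball c₁ r₁) := by
        refine mul_le_mul_right ?_ _
        calc ENNReal.ofReal D₁ * (ENNReal.ofReal (r₁ ^ n) * V)
            = ENNReal.ofReal D₁ * volume (ball c₁ r₁) := by rw [hv1]
          _ ≤ _ := h1

end
end

section
/- For every a > 0 there exists a constant d' = d'_a, depending only on a and the dimension n, such that for every admissible ball B(x,r) ∈ 𝓑_a one has γ(B(x,2r)) ≤ d' γ(B(x,r)). -/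
open MeasureTheory Metric Set
open scoped ENNReal NNReal BigOperators

noncomputable section

lemma mfun_le_one' {n : ℕ} (x : EuclideanSpace ℝ (Fin n)) : mfun x ≤ 1 := by
  unfold mfun
  split
  · exact le_refl 1
  · next h => exact inv_le_one_of_one_le₀ (le_of_lt (lt_of_not_ge h))

lemma mfun_mul_norm_le_one' {n : ℕ} (x : EuclideanSpace ℝ (Fin n)) : mfun x * ‖x‖ ≤ 1 := by
  unfold mfun
  split
  · next h => simpa using h
  · next h =>
    rw [inv_mul_cancel₀ (ne_of_gt (by linarith [lt_of_not_ge h] : (0:ℝ) < ‖x‖))]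

lemma sq_norm_diff_bound' {n : ℕ} {a r : ℝ} (ha : 0 < a) {x y : EuclideanSpace ℝ (Fin n)}
    (hr0 : 0 ≤ r) (hr : r ≤ a * mfun x) (hy : dist y x ≤ 2 * r) :
    |‖y‖ ^ 2 - ‖x‖ ^ 2| ≤ 4 * a + 4 * a ^ 2 := by
  have h1 : |‖y‖ - ‖x‖| ≤ 2 * r := by
    calc |‖y‖ - ‖x‖| ≤ ‖y - x‖ := abs_norm_sub_norm_le y x
      _ = dist y x := (dist_eq_norm y x).symm
      _ ≤ 2 * r := hy
  have hra : r ≤ a := le_trans hr (by nlinarith [mfun_le_one' x])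
  have hrx : r * ‖x‖ ≤ a := by
    calc r * ‖x‖ ≤ (a * mfun x) * ‖x‖ := by
          exact mul_le_mul_of_nonneg_right hr (norm_nonneg x)
      _ = a * (mfun x * ‖x‖) := by ring
      _ ≤ a * 1 := by nlinarith [mfun_mul_norm_le_one' x]
      _ = a := mul_one a
  have h2 := abs_le.mp h1
  have hx0 := norm_nonneg x
  have hy0 := norm_nonneg y
  rw [abs_le]
  constructor <;> nlinarith [h2.1, h2.2]

/-- gaussian doubling on admissible balls, centred form. -/
theorem gaussian_doubling_centred (n : ℕ) (a : ℝ) (ha : 0 < a) :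
    ∃ d' > (0 : ℝ), ∀ (x : EuclideanSpace ℝ (Fin n)) (r : ℝ),
      0 ≤ r → r ≤ a * mfun x →
      gaussMeasure n (ball x (2 * r)) ≤ ENNReal.ofReal d' * gaussMeasure n (ball x r) := by
  set K : ℝ := 2 * a + 2 * a ^ 2 with hK
  have hK0 : 0 < K := by positivity
  refine ⟨2 ^ n * Real.exp (2 * K), by positivity, ?_⟩
  intro x r hr0 hr
  rcases eq_or_lt_of_le hr0 with h0 | hr0
  · simp [← h0]
  set c : ℝ := (2 * Real.pi) ^ (-(n : ℝ) / 2) with hc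
  have hc0 : 0 < c := by
    apply Real.rpow_pos_of_pos
    positivity
  set E : ℝ := Real.exp (-‖x‖ ^ 2 / 2) with hE
  have hE0 : 0 < E := Real.exp_pos _
  clear_value K c E
  have hmeas : Measurable fun y : EuclideanSpace ℝ (Fin n) =>
      ENNReal.ofReal (c * Real.exp (-‖y‖ ^ 2 / 2)) := by
    apply Measurable.ennreal_ofReal
    fun_prop
  -- pointwise density comparisons
  have hub : ∀ y ∈ ball x (2 * r),
      ENNReal.ofReal (c * Real.exp (-‖y‖ ^ 2 / 2)) ≤
        ENNReal.ofReal (c * (Real.exp K * E)) := by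
    intro y hy
    apply ENNReal.ofReal_le_ofReal
    have hb := sq_norm_diff_bound' ha hr0.le hr (le_of_lt (mem_ball.mp hy))
    have : Real.exp (-‖y‖ ^ 2 / 2) ≤ Real.exp K * E := by
      rw [hE, ← Real.exp_add, Real.exp_le_exp]
      have := (abs_le.mp hb).2
      have := (abs_le.mp hb).1
      rw [hK]; linarith
    nlinarith
  have hlb : ∀ y ∈ ball x r,
      ENNReal.ofReal (c * (Real.exp (-K) * E)) ≤
        ENNReal.ofReal (c * Real.exp (-‖y‖ ^ 2 / 2)) := by
    intro y hy
    apply ENNReal.ofReal_le_ofReal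
    have hy' : dist y x ≤ 2 * r := by
      have := mem_ball.mp hy; linarith
    have hb := sq_norm_diff_bound' ha hr0.le hr hy'
    have : Real.exp (-K) * E ≤ Real.exp (-‖y‖ ^ 2 / 2) := by
      rw [hE, ← Real.exp_add, Real.exp_le_exp]
      have := (abs_le.mp hb).2
      have := (abs_le.mp hb).1
      rw [hK]; linarith
    nlinarith
  -- integral bounds
  have hub' : gaussMeasure n (ball x (2 * r)) ≤
      ENNReal.ofReal (c * (Real.exp K * E)) * volume (ball x (2 * r)) := by
    rw [gaussMeasure, withDensity_apply _ measurableSet_ball]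
    simp only [← hc]
    calc ∫⁻ y in ball x (2 * r), ENNReal.ofReal (c * Real.exp (-‖y‖ ^ 2 / 2)) ∂volume
        ≤ ∫⁻ _ in ball x (2 * r), ENNReal.ofReal (c * (Real.exp K * E)) ∂volume :=
          setLIntegral_mono measurable_const hub
      _ = ENNReal.ofReal (c * (Real.exp K * E)) * volume (ball x (2 * r)) :=
          setLIntegral_const _ _
  have hlb' : ENNReal.ofReal (c * (Real.exp (-K) * E)) * volume (ball x r) ≤
      gaussMeasure n (ball x r) := by
    rw [gaussMeasure, withDensity_apply _ measurableSet_ball]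
    simp only [← hc]
    calc ENNReal.ofReal (c * (Real.exp (-K) * E)) * volume (ball x r)
        = ∫⁻ _ in ball x r, ENNReal.ofReal (c * (Real.exp (-K) * E)) ∂volume :=
          (setLIntegral_const _ _).symm
      _ ≤ ∫⁻ y in ball x r, ENNReal.ofReal (c * Real.exp (-‖y‖ ^ 2 / 2)) ∂volume :=
          setLIntegral_mono hmeas hlb
  -- ball volume scaling
  have hball : volume (ball x (2 * r)) = ENNReal.ofReal (2 ^ n) * volume (ball x r) := by
    rw [Measure.addHaar_ball_mul_of_pos volume x (by norm_num : (0:ℝ) < 2) r,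
      finrank_euclideanSpace_fin, ← Measure.addHaar_ball_center volume x]
  calc gaussMeasure n (ball x (2 * r))
      ≤ ENNReal.ofReal (c * (Real.exp K * E)) * (ENNReal.ofReal (2 ^ n) * volume (ball x r)) := by
        rw [← hball]; exact hub'
    _ = ENNReal.ofReal (2 ^ n * Real.exp (2 * K)) *
        (ENNReal.ofReal (c * (Real.exp (-K) * E)) * volume (ball x r)) := by
        have e1 : ENNReal.ofReal (c * (Real.exp K * E)) * ENNReal.ofReal ((2 : ℝ) ^ n)
            = ENNReal.ofReal (2 ^ n * Real.exp (2 * K)) *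
              ENNReal.ofReal (c * (Real.exp (-K) * E)) := by
          rw [← ENNReal.ofReal_mul (by positivity), ← ENNReal.ofReal_mul (by positivity)]
          congr 1
          have h1 : Real.exp K * Real.exp (-K) = 1 := by
            rw [← Real.exp_add]; simp
          rw [show (2 : ℝ) * K = K + K by ring, Real.exp_add]
          linear_combination (-(2 ^ n * Real.exp K * c * E)) * h1
        calc ENNReal.ofReal (c * (Real.exp K * E)) *
              (ENNReal.ofReal ((2 : ℝ) ^ n) * volume (ball x r))
            = ENNReal.ofReal (c * (Real.exp K * E)) * ENNReal.ofReal ((2 : ℝ) ^ n) *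
              volume (ball x r) := (mul_assoc _ _ _).symm
          _ = ENNReal.ofReal (2 ^ n * Real.exp (2 * K)) *
              ENNReal.ofReal (c * (Real.exp (-K) * E)) * volume (ball x r) := by rw [e1]
          _ = ENNReal.ofReal (2 ^ n * Real.exp (2 * K)) *
              (ENNReal.ofReal (c * (Real.exp (-K) * E)) * volume (ball x r)) := mul_assoc _ _ _
    _ ≤ ENNReal.ofReal (2 ^ n * Real.exp (2 * K)) * gaussMeasure n (ball x r) :=
        mul_le_mul_right hlb' _

end
end

section
/- (Doubling property for admissible dyadic cubes.) Let α > 0. There exists a constant C_{α,n}, depending only on α and the dimension n, such that for every cube Q ∈ Δ^γ one has γ(α∘Q) ≤ C_{α,n} γ(Q), where α∘Q denotes the cube with the same centre as Q and α times its side-length. -/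
open MeasureTheory Metric Set
open scoped ENNReal NNReal BigOperators

noncomputable section

lemma euclid_box_eq (n : ℕ) (a b : Fin n → ℝ) :
    {x : EuclideanSpace ℝ (Fin n) | ∀ i, x i ∈ Set.Ico (a i) (b i)} =
      ((MeasurableEquiv.toLp 2 (Fin n → ℝ)).symm) ⁻¹' (Set.univ.pi fun i => Set.Ico (a i) (b i)) := by
  ext x; simp [Set.mem_pi, MeasurableEquiv.toLp]; exact Iff.rfl

lemma euclid_box_measurable (n : ℕ) (a b : Fin n → ℝ) :
    MeasurableSet {x : EuclideanSpace ℝ (Fin n) | ∀ i, x i ∈ Set.Ico (a i) (b i)} := by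
  rw [euclid_box_eq]
  exact ((MeasurableEquiv.toLp 2 (Fin n → ℝ)).symm).measurable
    (MeasurableSet.univ_pi fun i => measurableSet_Ico)

lemma euclid_box_volume (n : ℕ) (a b : Fin n → ℝ) :
    volume {x : EuclideanSpace ℝ (Fin n) | ∀ i, x i ∈ Set.Ico (a i) (b i)} =
      ∏ i, ENNReal.ofReal (b i - a i) := by
  rw [euclid_box_eq]
  rw [(EuclideanSpace.volume_preserving_symm_measurableEquiv_toLp (Fin n)).measure_preimage
    ((MeasurableSet.univ_pi fun i => measurableSet_Ico).nullMeasurableSet)]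
  rw [volume_pi_pi]
  simp [Real.volume_Ico]

lemma gauss_density_measurable (c₀ : ℝ) (n : ℕ) :
    Measurable fun x : EuclideanSpace ℝ (Fin n) =>
      ENNReal.ofReal (c₀ * Real.exp (-‖x‖ ^ 2 / 2)) := by
  fun_prop

lemma sq_sum_diff_bound (n : ℕ) (x c : Fin n → ℝ) (s M : ℝ) (hs : 0 ≤ s)
    (hxc : ∀ i, |x i - c i| ≤ s) (hc : ∀ i, |c i| ≤ M) :
    |∑ i, x i ^ 2 - ∑ i, c i ^ 2| ≤ n * (s * (2 * M + s)) := by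
  rw [← Finset.sum_sub_distrib]
  calc |∑ i, (x i ^ 2 - c i ^ 2)| ≤ ∑ i, |x i ^ 2 - c i ^ 2| := Finset.abs_sum_le_sum_abs _ _
    _ ≤ ∑ _i : Fin n, s * (2 * M + s) := by
        apply Finset.sum_le_sum
        intro i _
        have h1 := hxc i
        have h2 := hc i
        have h3 : |x i ^ 2 - c i ^ 2| = |x i - c i| * |x i + c i| := by
          rw [← abs_mul]; ring_nf
        rw [h3]
        have h4 : |x i + c i| ≤ 2 * M + s := by
          have h5 : |x i + c i| ≤ |x i| + |c i| := abs_add_le _ _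
          have h6 : |x i| ≤ |c i| + s := by
            linarith [abs_sub_abs_le_abs_sub (x i) (c i)]
          linarith
        exact mul_le_mul h1 h4 (abs_nonneg _) hs
    _ = n * (s * (2 * M + s)) := by simp [Finset.sum_const, mul_comm]

lemma norm_sq_euclid (n : ℕ) (x : EuclideanSpace ℝ (Fin n)) :
    ‖x‖ ^ 2 = ∑ i, x i ^ 2 := by
  rw [EuclideanSpace.norm_eq, Real.sq_sqrt]
  · simp [sq_abs]
  · positivity

set_option maxHeartbeats 1000000 in
/-- doubling property for admissible dyadic cubes: `γ(α∘Q) ≤ C_{α,n} γ(Q)`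
for every `Q ∈ Δ^γ`, i.e. every cube of `Δ_{l+k}` contained in the layer `L_l`. -/
theorem gaussian_doubling_cubes (n : ℕ) (α : ℝ) (hα : 0 < α) :
    ∃ C > (0 : ℝ), ∀ (k l : ℕ) (v : Fin n → ℤ),
      dyadicCube n (l + k) v ⊆ layer n l →
      gaussMeasure n (scaledCube n (l + k) v α) ≤
        ENNReal.ofReal C * gaussMeasure n (dyadicCube n (l + k) v) := by
  set B : ℝ := n * ((1 + α) + ((1 + α) / 2) ^ 2) with hB
  refine ⟨α ^ n * Real.exp B, by positivity, ?_⟩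
  intro k l v hQ
  set K : ℕ := l + k with hK
  set δ : ℝ := (2 : ℝ) ^ (-(K : ℤ)) with hδ
  have hδpos : 0 < δ := by positivity
  have hδ1 : δ ≤ 1 := zpow_le_one_of_nonpos₀ (by norm_num) (neg_nonpos.mpr (by positivity))
  have hδM : δ * 2 ^ l ≤ 1 := by
    have h : δ * (2 : ℝ) ^ l = 2 ^ (-(k : ℤ)) := by
      rw [hδ, ← zpow_natCast (2 : ℝ) l, ← zpow_add₀ (by norm_num : (2 : ℝ) ≠ 0)]
      congr 1; push_cast [hK]; ring
    rw [h]
    exact zpow_le_one_of_nonpos₀ (by norm_num) (neg_nonpos.mpr (by positivity))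
  set c : EuclideanSpace ℝ (Fin n) := cubeCenter n K v with hcdef
  have hci : ∀ i, c i = δ * (v i + 1 / 2) := fun i => rfl
  have hcQ : c ∈ dyadicCube n K v := by
    intro i
    rw [Set.mem_Ico, hci i]
    constructor
    · nlinarith [hδpos]
    · nlinarith [hδpos]
  have hcbound : ∀ i, |c i| ≤ 2 ^ l := by
    have hcl : c ∈ layer n l := hQ hcQ
    intro i
    cases l with
    | zero =>
        have h := hcl i
        rw [Set.mem_Ico] at h
        simpa using abs_le.mpr ⟨h.1, h.2.le⟩
    | succ m =>
        have h := hcl.1 i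
        rw [Set.mem_Ico] at h
        exact abs_le.mpr ⟨by linarith [h.1], h.2.le⟩
  have key : ∀ x : EuclideanSpace ℝ (Fin n),
      (∀ i, |x i - c i| ≤ (1 + α) * δ / 2) → |‖x‖ ^ 2 - ‖c‖ ^ 2| ≤ B := by
    intro x hx
    rw [norm_sq_euclid, norm_sq_euclid]
    have h := sq_sum_diff_bound n (fun i => x i) (fun i => c i) ((1 + α) * δ / 2) (2 ^ l)
      (by positivity) hx hcbound
    refine h.trans ?_
    have h2l : (0 : ℝ) < 2 ^ l := by positivity
    have hs1 : (1 + α) * δ / 2 * (2 * 2 ^ l + (1 + α) * δ / 2)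
        ≤ (1 + α) + ((1 + α) / 2) ^ 2 := by
      have e1 : (1 + α) * (δ * 2 ^ l) ≤ (1 + α) * 1 :=
        mul_le_mul_of_nonneg_left hδM (by linarith)
      have e2 : δ ^ 2 ≤ 1 := by nlinarith
      nlinarith [e1, e2, sq_nonneg (1 + α),
        mul_le_mul_of_nonneg_left e2 (sq_nonneg ((1 + α) / 2))]
    rw [hB]
    exact mul_le_mul_of_nonneg_left hs1 (Nat.cast_nonneg n)
  set c₀ : ℝ := (2 * Real.pi) ^ (-(n : ℝ) / 2) with hc₀
  have hc₀pos : 0 < c₀ := Real.rpow_pos_of_pos (by positivity) _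
  set Msup : ℝ := c₀ * Real.exp ((-‖c‖ ^ 2 + B) / 2) with hMsup
  set Minf : ℝ := c₀ * Real.exp ((-‖c‖ ^ 2 - B) / 2) with hMinf
  have hSmeas : MeasurableSet (scaledCube n K v α) :=
    euclid_box_measurable n (fun i => c i - α * δ / 2) (fun i => c i + α * δ / 2)
  have hQmeas : MeasurableSet (dyadicCube n K v) :=
    euclid_box_measurable n (fun i => δ * v i) (fun i => δ * (v i + 1))
  have hvolS : volume (scaledCube n K v α) = ENNReal.ofReal ((α * δ) ^ n) := by
    have h1 : volume (scaledCube n K v α)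
        = ∏ i : Fin n, ENNReal.ofReal ((c i + α * δ / 2) - (c i - α * δ / 2)) :=
      euclid_box_volume n (fun i => c i - α * δ / 2) (fun i => c i + α * δ / 2)
    rw [h1]
    have h2 : ∀ i ∈ Finset.univ, ENNReal.ofReal ((c i + α * δ / 2) - (c i - α * δ / 2))
        = ENNReal.ofReal (α * δ) := by intro i _; congr 1; ring
    rw [Finset.prod_congr rfl h2, Finset.prod_const, Finset.card_univ, Fintype.card_fin,
      ← ENNReal.ofReal_pow (by positivity)]
  have hvolQ : volume (dyadicCube n K v) = ENNReal.ofReal (δ ^ n) := by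
    have h1 : volume (dyadicCube n K v)
        = ∏ i : Fin n, ENNReal.ofReal (δ * (v i + 1) - δ * v i) :=
      euclid_box_volume n (fun i => δ * v i) (fun i => δ * (v i + 1))
    rw [h1]
    have h2 : ∀ i ∈ Finset.univ, ENNReal.ofReal (δ * (v i + 1) - δ * v i)
        = ENNReal.ofReal δ := by intro i _; congr 1; ring
    rw [Finset.prod_congr rfl h2, Finset.prod_const, Finset.card_univ, Fintype.card_fin,
      ← ENNReal.ofReal_pow hδpos.le]
  have hup : gaussMeasure n (scaledCube n K v α)
      ≤ ENNReal.ofReal Msup * ENNReal.ofReal ((α * δ) ^ n) := by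
    unfold gaussMeasure
    rw [withDensity_apply _ hSmeas]
    calc ∫⁻ x in scaledCube n K v α,
          ENNReal.ofReal ((2 * Real.pi) ^ (-(n : ℝ) / 2) * Real.exp (-‖x‖ ^ 2 / 2)) ∂volume
        ≤ ∫⁻ _x in scaledCube n K v α, ENNReal.ofReal Msup ∂volume := by
          apply setLIntegral_mono measurable_const
          intro x hx
          apply ENNReal.ofReal_le_ofReal
          rw [hMsup]
          apply mul_le_mul_of_nonneg_left _ hc₀pos.le
          apply Real.exp_le_exp.mpr
          have hxc : ∀ i, |x i - c i| ≤ (1 + α) * δ / 2 := by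
            intro i
            have h := hx i
            rw [Set.mem_Ico] at h
            rw [abs_le]
            constructor <;> nlinarith [h.1, h.2, hδpos.le]
          have habs := abs_le.mp (key x hxc)
          linarith [habs.1]
      _ = ENNReal.ofReal Msup * volume (scaledCube n K v α) := setLIntegral_const _ _
      _ = ENNReal.ofReal Msup * ENNReal.ofReal ((α * δ) ^ n) := by rw [hvolS]
  have hlow : ENNReal.ofReal Minf * ENNReal.ofReal (δ ^ n)
      ≤ gaussMeasure n (dyadicCube n K v) := by
    unfold gaussMeasure
    rw [withDensity_apply _ hQmeas]
    calc ENNReal.ofReal Minf * ENNReal.ofReal (δ ^ n)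
        = ∫⁻ _x in dyadicCube n K v, ENNReal.ofReal Minf ∂volume := by
          rw [setLIntegral_const, hvolQ]
      _ ≤ ∫⁻ x in dyadicCube n K v,
            ENNReal.ofReal ((2 * Real.pi) ^ (-(n : ℝ) / 2) * Real.exp (-‖x‖ ^ 2 / 2)) ∂volume := by
          apply setLIntegral_mono (gauss_density_measurable _ n)
          intro x hx
          apply ENNReal.ofReal_le_ofReal
          rw [hMinf]
          apply mul_le_mul_of_nonneg_left _ hc₀pos.le
          apply Real.exp_le_exp.mpr
          have hxc : ∀ i, |x i - c i| ≤ (1 + α) * δ / 2 := by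
            intro i
            have h := hx i
            rw [Set.mem_Ico] at h
            have h1 : δ * (v i : ℝ) ≤ x i := h.1
            have h2 : x i < δ * ((v i : ℝ) + 1) := h.2
            rw [hci i, abs_le]
            constructor <;> nlinarith [mul_nonneg hα.le hδpos.le]
          have habs := abs_le.mp (key x hxc)
          linarith [habs.2]
  calc gaussMeasure n (scaledCube n K v α)
      ≤ ENNReal.ofReal Msup * ENNReal.ofReal ((α * δ) ^ n) := hup
    _ = ENNReal.ofReal (α ^ n * Real.exp B) * (ENNReal.ofReal Minf * ENNReal.ofReal (δ ^ n)) := by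
        rw [← ENNReal.ofReal_mul (by positivity), ← ENNReal.ofReal_mul (by positivity),
          ← ENNReal.ofReal_mul (by positivity)]
        congr 1
        rw [hMsup, hMinf, mul_pow]
        have hexp : Real.exp ((-‖c‖ ^ 2 + B) / 2)
            = Real.exp B * Real.exp ((-‖c‖ ^ 2 - B) / 2) := by
          rw [← Real.exp_add]; congr 1; ring
        rw [hexp]; ring
    _ ≤ ENNReal.ofReal (α ^ n * Real.exp B) * gaussMeasure n (dyadicCube n K v) :=
        mul_le_mul_right hlow _


end
end

section
/- For all A, a > 0 and all x ∈ ℝⁿ, one has the cone inclusions Γ^{(A,a)}_x(γ) ⊆ Γ̃^{(A,c_{a,A})}_x(γ) and Γ̃^{(A,a)}_x(γ) ⊆ Γ^{(A,c_{a,A})}_x(γ), where c_{a,A} := a(1+aA). -/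
open MeasureTheory Metric Set
open scoped ENNReal NNReal BigOperators

noncomputable section

lemma mfun_eq_inv_max {n : ℕ} (x : EuclideanSpace ℝ (Fin n)) :
    mfun x = (max 1 ‖x‖)⁻¹ := by
  unfold mfun
  split
  · rw [max_eq_left ‹_›, inv_one]
  · rw [max_eq_right (le_of_not_ge ‹_›)]

lemma cone_key {n : ℕ} (A a : ℝ) (hA : 0 < A) (ha : 0 < a)
    (x y : EuclideanSpace ℝ (Fin n)) (t : ℝ) (hd : dist y x < A * t)
    (ht : 0 < t) (hm : t < a * mfun x) : t < a * (1 + a * A) * mfun y := by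
  set M := max 1 ‖x‖ with hMdef
  set N := max 1 ‖y‖ with hNdef
  have hM : (1 : ℝ) ≤ M := le_max_left _ _
  have hN : (1 : ℝ) ≤ N := le_max_left _ _
  have hM0 : 0 < M := lt_of_lt_of_le one_pos hM
  have hN0 : 0 < N := lt_of_lt_of_le one_pos hN
  have hmx : mfun x = M⁻¹ := mfun_eq_inv_max x
  have hmy : mfun y = N⁻¹ := mfun_eq_inv_max y
  have hinvM : M⁻¹ ≤ M := by
    calc M⁻¹ ≤ 1 := inv_le_one_of_one_le₀ hM
    _ ≤ M := hM
  have hy : ‖y‖ ≤ ‖x‖ + a * A * M⁻¹ := by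
    have h1 : ‖y‖ ≤ ‖x‖ + dist y x := by
      have := dist_triangle y x 0
      simp only [dist_zero_right, dist_comm] at this
      linarith [dist_comm y x ▸ this]
    have h2 : dist y x < A * (a * M⁻¹) := by
      calc dist y x < A * t := hd
      _ ≤ A * (a * M⁻¹) := by
          apply mul_le_mul_of_nonneg_left _ hA.le
          rw [hmx] at hm; linarith
    nlinarith
  have hNM : N ≤ M * (1 + a * A) := by
    apply max_le
    · nlinarith [mul_pos (mul_pos ha hA) hM0]
    · calc ‖y‖ ≤ ‖x‖ + a * A * M⁻¹ := hy
      _ ≤ M + a * A * M := by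
          have hx' : ‖x‖ ≤ M := le_max_right _ _
          nlinarith [mul_le_mul_of_nonneg_left hinvM (mul_pos ha hA).le]
      _ = M * (1 + a * A) := by ring
  have hfin : M⁻¹ ≤ (1 + a * A) * N⁻¹ := by
    have heq : (1 + a * A) * N⁻¹ = (1 + a * A) / N := by rw [div_eq_mul_inv]
    rw [heq, le_div_iff₀ hN0, inv_mul_le_iff₀ hM0]
    exact hNM
  rw [hmy]
  rw [hmx] at hm
  calc t < a * M⁻¹ := hm
  _ ≤ a * ((1 + a * A) * N⁻¹) := mul_le_mul_of_nonneg_left hfin ha.le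
  _ = a * (1 + a * A) * N⁻¹ := by ring

/-- inclusions between the two kinds of admissible cones. -/
theorem cone_inclusions (n : ℕ) (A a : ℝ) (hA : 0 < A) (ha : 0 < a)
    (x : EuclideanSpace ℝ (Fin n)) :
    cone n A a x ⊆ coneT n A (a * (1 + a * A)) x ∧
    coneT n A a x ⊆ cone n A (a * (1 + a * A)) x := by
  constructor
  · rintro ⟨y, t⟩ ⟨hd, ht, hm⟩
    exact ⟨hd, ht, cone_key A a hA ha x y t hd ht hm⟩
  · rintro ⟨y, t⟩ ⟨hd, ht, hm⟩
    refine ⟨hd, ht, cone_key A a hA ha y x t ?_ ht hm⟩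
    rwa [dist_comm]

end
end

section
/- Let a > 0, let Q ∈ Δ^γ_0 be a cube with centre c_Q, and let x ∈ Q. If B(x,r) ∈ 𝓑_a is an admissible ball centred at x, then r ≤ (2+n)·a·m(c_Q). -/
open MeasureTheory Metric Set
open scoped ENNReal NNReal BigOperators

noncomputable section

private lemma aux_coord_le_norm {n : ℕ} (y : EuclideanSpace ℝ (Fin n)) (i : Fin n) :
    |y i| ≤ ‖y‖ := by
  rw [EuclideanSpace.norm_eq, ← Real.sqrt_sq_eq_abs (y i)]
  apply Real.sqrt_le_sqrt
  have := Finset.single_le_sum (f := fun j => ‖y j‖ ^ 2) (fun j _ => by positivity)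
    (Finset.mem_univ i)
  simpa using this

private lemma aux_norm_le {n : ℕ} (C : ℝ) (hC : 0 ≤ C) (y : EuclideanSpace ℝ (Fin n))
    (h : ∀ i, |y i| ≤ C) : ‖y‖ ≤ Real.sqrt n * C := by
  rw [EuclideanSpace.norm_eq]
  calc Real.sqrt (∑ i, ‖y i‖ ^ 2) ≤ Real.sqrt (∑ _i : Fin n, C ^ 2) := by
        apply Real.sqrt_le_sqrt
        apply Finset.sum_le_sum
        intro i _
        have := h i
        rw [Real.norm_eq_abs]
        nlinarith [abs_nonneg (y i)]
    _ = Real.sqrt n * C := by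
        rw [Finset.sum_const, Finset.card_univ, Fintype.card_fin, nsmul_eq_mul,
          Real.sqrt_mul (by positivity), Real.sqrt_sq hC]

private lemma aux_one_div_le_mfun {n : ℕ} (C : ℝ) (hC : 1 ≤ C)
    (y : EuclideanSpace ℝ (Fin n)) (h : ‖y‖ ≤ C) : 1 / C ≤ mfun y := by
  unfold mfun
  split_ifs with hy
  · exact div_le_one_of_le₀ hC (by linarith)
  · rw [one_div]
    push_neg at hy
    gcongr

private lemma aux_mfun_le_one_div {n : ℕ} (C : ℝ) (hC : 1 ≤ C)
    (y : EuclideanSpace ℝ (Fin n)) (h : C ≤ ‖y‖) : mfun y ≤ 1 / C := by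
  unfold mfun
  split_ifs with hy
  · have : C = 1 := le_antisymm (h.trans hy) hC
    rw [this]; norm_num
  · rw [one_div]
    gcongr

/-- if `x ∈ Q ∈ Δ^γ_0` and `B(x,r) ∈ 𝓑_a`, then `r ≤ (2+n)·a·m(c_Q)`. -/
theorem admissible_radius_in_cube (n : ℕ) (a : ℝ) (ha : 0 < a) (l : ℕ) (v : Fin n → ℤ)
    (hQ : dyadicCube n l v ⊆ layer n l)
    (x : EuclideanSpace ℝ (Fin n)) (hx : x ∈ dyadicCube n l v)
    (r : ℝ) (hr0 : 0 ≤ r) (hr : r ≤ a * mfun x) :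
    r ≤ (2 + n) * a * mfun (cubeCenter n l v) := by
  -- the centre belongs to the cube, hence to the layer
  have h2l : (0 : ℝ) < (2 : ℝ) ^ (-(l : ℤ)) := by positivity
  have hc : cubeCenter n l v ∈ dyadicCube n l v := by
    intro i
    unfold cubeCenter
    dsimp only
    constructor
    · nlinarith
    · nlinarith
  have hxL := hQ hx
  have hcL := hQ hc
  have hn2 : (1 : ℝ) ≤ 2 + n := by have := Nat.cast_nonneg (α := ℝ) n; linarith
  have hsqrtn : Real.sqrt n ≤ 2 + n := by
    nlinarith [Real.sq_sqrt (Nat.cast_nonneg (α := ℝ) n), Real.sqrt_nonneg (n : ℝ)]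
  have hmx1 : mfun x ≤ 1 := by
    unfold mfun
    split_ifs with hy
    · exact le_refl 1
    · push_neg at hy
      exact inv_le_one_of_one_le₀ hy.le
  cases l with
  | zero =>
    -- layer 0 : all coordinates in [-1,1)
    have hcb : ∀ i, |cubeCenter n 0 v i| ≤ 1 := by
      intro i
      have := hcL i
      rw [abs_le]
      constructor
      · linarith [this.1]
      · linarith [this.2]
    have hnc : ‖cubeCenter n 0 v‖ ≤ 2 + n := by
      calc ‖cubeCenter n 0 v‖ ≤ Real.sqrt n * 1 := aux_norm_le 1 zero_le_one _ hcb
        _ = Real.sqrt n := mul_one _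
        _ ≤ 2 + n := hsqrtn
    have hmc : 1 / (2 + n) ≤ mfun (cubeCenter n 0 v) := aux_one_div_le_mfun _ hn2 _ hnc
    calc r ≤ a * mfun x := hr
      _ ≤ a * 1 := by nlinarith
      _ = (2 + n) * a * (1 / (2 + n)) := by field_simp
      _ ≤ (2 + n) * a * mfun (cubeCenter n 0 v) := by
          apply mul_le_mul_of_nonneg_left hmc (by positivity)
  | succ k =>
    have h2k : (1 : ℝ) ≤ (2 : ℝ) ^ k := one_le_pow₀ one_le_two
    -- x has a big coordinate
    obtain ⟨hbigx, hnotx⟩ := hxL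
    simp only [Set.mem_setOf_eq, Set.mem_Ico, not_forall, not_and, not_lt, not_le] at hnotx
    have hxlarge : (2 : ℝ) ^ k ≤ ‖x‖ := by
      obtain ⟨i, hi⟩ := hnotx
      rcases le_or_gt (-(2 : ℝ) ^ k) (x i) with h' | h'
      · have := hi h'
        calc (2 : ℝ) ^ k ≤ |x i| := le_trans this (le_abs_self _)
          _ ≤ ‖x‖ := aux_coord_le_norm x i
      · calc (2 : ℝ) ^ k ≤ |x i| := by rw [abs_of_neg (by nlinarith)]; linarith
          _ ≤ ‖x‖ := aux_coord_le_norm x i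
    -- the centre has all coordinates bounded by 2^(k+1)
    obtain ⟨hbigc, -⟩ := hcL
    have hcb : ∀ i, |cubeCenter n (k + 1) v i| ≤ (2 : ℝ) ^ (k + 1) := by
      intro i
      have := hbigc i
      rw [abs_le]
      constructor
      · linarith [this.1]
      · linarith [this.2]
    have hnc : ‖cubeCenter n (k + 1) v‖ ≤ (2 + n) * (2 : ℝ) ^ k := by
      calc ‖cubeCenter n (k + 1) v‖ ≤ Real.sqrt n * (2 : ℝ) ^ (k + 1) :=
            aux_norm_le _ (by positivity) _ hcb
        _ = Real.sqrt n * 2 * (2 : ℝ) ^ k := by ring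
        _ ≤ (2 + n) * (2 : ℝ) ^ k := by
            have h2s : Real.sqrt n * 2 ≤ 2 + n := by
              nlinarith [Real.sq_sqrt (Nat.cast_nonneg (α := ℝ) n), Real.sqrt_nonneg (n : ℝ)]
            nlinarith
    have hCge : (1 : ℝ) ≤ (2 + n) * (2 : ℝ) ^ k := by nlinarith
    have hmc : 1 / ((2 + n) * (2 : ℝ) ^ k) ≤ mfun (cubeCenter n (k + 1) v) :=
      aux_one_div_le_mfun _ hCge _ hnc
    have hmx : mfun x ≤ 1 / (2 : ℝ) ^ k := aux_mfun_le_one_div _ h2k _ hxlarge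
    calc r ≤ a * mfun x := hr
      _ ≤ a * (1 / (2 : ℝ) ^ k) := by nlinarith
      _ = (2 + n) * a * (1 / ((2 + n) * (2 : ℝ) ^ k)) := by field_simp
      _ ≤ (2 + n) * a * mfun (cubeCenter n (k + 1) v) := by
          apply mul_le_mul_of_nonneg_left hmc (by positivity)


end
end
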